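/- Let X be a convex subset of a real normed vector space and let F : X × X → ℝ satisfy (A1) uniform α-strong convexity in the second argument, (A2) uniform G₂-Lipschitz continuity in the second argument, and (A3) uniform β-Lipschitz continuity of ∇₂F in the first argument; set θ = β/α and suppose θ < 1. Let (x_n) be the value-aggregation sequence: x₁ ∈ X and x_{n+1} ∈ argmin_{x∈X} Σ_{k=1}^n F(x_k, x). For integers n > m ≥ 1 define S_{m:n} = (Σ_{k=m}^{n−1} ‖x_n − x_k‖)/(n−m). Then there exists a constant C > 0, depending only on θ, α, and G₂, such that for all n > m ≥ 2, S_{m:n} ≤ C ( θ/((n−m) m^{2−θ}) + 1/n^{1−θ} ). -/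

import Mathlib

universe u

open Finset Real

/-- Bernoulli step: `θ * (t+1)^(θ-1) ≤ (t+1)^θ - t^θ` for `1 ≤ t`, `0 ≤ θ ≤ 1`. -/
lemma aux_F2 {θ : ℝ} (h0 : 0 ≤ θ) (h1 : θ ≤ 1) {t : ℝ} (ht : 1 ≤ t) :
    θ * (t + 1) ^ (θ - 1) ≤ (t + 1) ^ θ - t ^ θ := by
  have hs : (0:ℝ) < t + 1 := by linarith
  have key : t ^ θ ≤ (t + 1) ^ θ * (1 - θ / (t + 1)) := by
    have hb : (1 + (-(1/(t+1)))) ^ θ ≤ 1 + θ * (-(1/(t+1))) :=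
      rpow_one_add_le_one_add_mul_self (by
        have : 1/(t+1) ≤ 1 := by
          rw [div_le_one hs]; linarith
        linarith) h0 h1
    have hmul : ((t+1) * (1 + (-(1/(t+1))))) ^ θ
        = (t+1) ^ θ * (1 + (-(1/(t+1)))) ^ θ :=
      Real.mul_rpow hs.le (by
        have : 1/(t+1) ≤ 1 := by rw [div_le_one hs]; linarith
        linarith)
    have hid : (t+1) * (1 + (-(1/(t+1)))) = t := by field_simp; ring
    calc t ^ θ = (t+1) ^ θ * (1 + (-(1/(t+1)))) ^ θ := by rw [← hmul, hid]
    _ ≤ (t+1) ^ θ * (1 + θ * (-(1/(t+1)))) := by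
        apply mul_le_mul_of_nonneg_left hb (Real.rpow_nonneg hs.le θ)
    _ = (t + 1) ^ θ * (1 - θ / (t + 1)) := by ring_nf
  have hsub : (t+1) ^ (θ - 1) = (t+1) ^ θ / (t+1) := Real.rpow_sub_one hs.ne' θ
  rw [hsub]
  have : (t + 1) ^ θ * (1 - θ / (t + 1)) = (t+1)^θ - θ * ((t+1)^θ / (t+1)) := by
    field_simp
  linarith [key, this ▸ key]

/-- `a^(θ-1) - (a+1)^(θ-1) ≤ (1-θ) * a^(θ-2)` for `1 ≤ a`, `0 ≤ θ ≤ 1`. -/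
lemma aux_F3 {θ : ℝ} (h0 : 0 ≤ θ) (h1 : θ ≤ 1) {a : ℝ} (ha : 1 ≤ a) :
    a ^ (θ - 1) - (a + 1) ^ (θ - 1) ≤ (1 - θ) * a ^ (θ - 2) := by
  have ha0 : (0:ℝ) < a := by linarith
  have ha1 : (0:ℝ) < a + 1 := by linarith
  -- rewrite a^(θ-1) = a^(θ-2) * a
  have e1 : a ^ (θ - 1) = a ^ (θ - 2) * a := by
    rw [← Real.rpow_add_one ha0.ne' (θ - 2)]; ring_nf
  rw [e1]
  have goal2 : a ^ (θ - 2) * (a - (1 - θ)) ≤ (a + 1) ^ (θ - 1) := by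
    by_cases hc : a - (1 - θ) ≤ 0
    · exact le_trans (mul_nonpos_of_nonneg_of_nonpos (Real.rpow_nonneg ha0.le _) hc)
        (Real.rpow_pos_of_pos ha1 _).le
    push_neg at hc
    -- a^(θ-2) = (a^(2-θ))⁻¹ ; (a+1)^(θ-1) = ((a+1)^(1-θ))⁻¹
    have e2 : a ^ (θ - 2) = (a ^ (2 - θ))⁻¹ := by
      rw [← Real.rpow_neg ha0.le]; ring_nf
    have e3 : (a + 1) ^ (θ - 1) = ((a + 1) ^ (1 - θ))⁻¹ := by
      rw [← Real.rpow_neg ha1.le]; ring_nf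
    rw [e2, e3]
    have hp1 : (0:ℝ) < a ^ (2 - θ) := Real.rpow_pos_of_pos ha0 _
    have hp2 : (0:ℝ) < (a + 1) ^ (1 - θ) := Real.rpow_pos_of_pos ha1 _
    rw [inv_mul_eq_div, inv_eq_one_div ((a + 1) ^ (1 - θ)), div_le_div_iff₀ hp1 hp2]
    -- goal: (a - (1-θ)) * (a+1)^(1-θ) ≤ 1 * a^(2-θ)
    have hbern : (a + 1) ^ (1 - θ) ≤ a ^ (1 - θ) * (1 + (1 - θ) / a) := by
      have hx : (0:ℝ) ≤ 1 / a := by positivity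
      have hb : (1 + 1/a) ^ (1 - θ) ≤ 1 + (1 - θ) * (1/a) :=
        rpow_one_add_le_one_add_mul_self (by linarith) (by linarith) (by linarith)
      have hmul : (a * (1 + 1/a)) ^ (1 - θ) = a ^ (1 - θ) * (1 + 1/a) ^ (1 - θ) :=
        Real.mul_rpow ha0.le (by positivity)
      have hid : a * (1 + 1/a) = a + 1 := by field_simp
      calc (a + 1) ^ (1 - θ) = a ^ (1 - θ) * (1 + 1/a) ^ (1 - θ) := by rw [← hmul, hid]
      _ ≤ a ^ (1 - θ) * (1 + (1 - θ) * (1/a)) := by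
          exact mul_le_mul_of_nonneg_left hb (Real.rpow_nonneg ha0.le _)
      _ = a ^ (1 - θ) * (1 + (1 - θ) / a) := by ring_nf
    have e4 : a ^ (2 - θ) = a ^ (1 - θ) * a := by
      rw [← Real.rpow_add_one ha0.ne' (1 - θ)]; ring_nf
    have hfin : (a - (1 - θ)) * (a ^ (1 - θ) * (1 + (1 - θ) / a)) ≤ a ^ (1 - θ) * a := by
      have hpa : (0:ℝ) < a ^ (1 - θ) := Real.rpow_pos_of_pos ha0 _
      have : (a - (1 - θ)) * (1 + (1 - θ) / a) ≤ a := by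
        have expand : (a - (1 - θ)) * (1 + (1 - θ) / a) = a - (1-θ)^2 / a := by
          field_simp; ring
        rw [expand]
        have : (0:ℝ) ≤ (1-θ)^2 / a := by positivity
        linarith
      calc (a - (1 - θ)) * (a ^ (1 - θ) * (1 + (1 - θ) / a))
          = a ^ (1 - θ) * ((a - (1 - θ)) * (1 + (1 - θ) / a)) := by ring
      _ ≤ a ^ (1 - θ) * a := mul_le_mul_of_nonneg_left this hpa.le
    calc (a - (1 - θ)) * (a + 1) ^ (1 - θ)
        ≤ (a - (1 - θ)) * (a ^ (1 - θ) * (1 + (1 - θ) / a)) :=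
          mul_le_mul_of_nonneg_left hbern hc.le
    _ ≤ a ^ (1 - θ) * a := hfin
    _ = 1 * a ^ (2 - θ) := by rw [e4]; ring
  nlinarith [goal2]

/-- `p^θ - p*(p+1)^(θ-1) ≤ 1 - θ` for `1 ≤ p`. -/
lemma aux_F3' {θ : ℝ} (h0 : 0 ≤ θ) (h1 : θ ≤ 1) {p : ℝ} (hp : 1 ≤ p) :
    p ^ θ - p * (p + 1) ^ (θ - 1) ≤ 1 - θ := by
  have hp0 : (0:ℝ) < p := by linarith
  have e1 : p ^ θ = p ^ (θ - 1) * p := by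
    rw [← Real.rpow_add_one hp0.ne' (θ - 1)]; ring_nf
  have e2 : p ^ (θ - 1) = p ^ (θ - 2) * p := by
    rw [← Real.rpow_add_one hp0.ne' (θ - 2)]; ring_nf
  have h3 := aux_F3 h0 h1 hp
  have h4 : p ^ (θ - 1) ≤ 1 := Real.rpow_le_one_of_one_le_of_nonpos hp (by linarith)
  -- p^θ - p*(p+1)^(θ-1) = p * (p^(θ-1) - (p+1)^(θ-1)) ≤ p * (1-θ) * p^(θ-2) = (1-θ) p^(θ-1) ≤ 1-θ
  have : p ^ θ - p * (p + 1) ^ (θ - 1) = p * (p ^ (θ - 1) - (p + 1) ^ (θ - 1)) := by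
    rw [e1]; ring
  rw [this]
  have step : p * (p ^ (θ - 1) - (p + 1) ^ (θ - 1)) ≤ p * ((1 - θ) * p ^ (θ - 2)) :=
    mul_le_mul_of_nonneg_left h3 hp0.le
  have e5 : p * ((1 - θ) * p ^ (θ - 2)) = (1 - θ) * p ^ (θ - 1) := by
    rw [e2]; ring
  have : (1 - θ) * p ^ (θ - 1) ≤ (1 - θ) * 1 :=
    mul_le_mul_of_nonneg_left h4 (by linarith)
  linarith [step, e5 ▸ step]

/-- Telescoped sum bound. -/
lemma aux_tsum {θ : ℝ} (h0 : 0 ≤ θ) (h1 : θ ≤ 1) (a : ℕ) (ha : 1 ≤ a) (q : ℕ) :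
    θ * ∑ j ∈ Finset.Icc (a + 1) (a + q), ((j : ℝ)) ^ (θ - 1)
      ≤ ((a + q : ℕ) : ℝ) ^ θ - ((a : ℕ) : ℝ) ^ θ := by
  induction q with
  | zero => simp
  | succ q ih =>
      have hle : a + 1 ≤ a + q + 1 := by omega
      rw [show a + (q + 1) = (a + q) + 1 by omega,
        Finset.sum_Icc_succ_top hle]
      have ht : (1:ℝ) ≤ ((a + q : ℕ) : ℝ) := by
        have : 1 ≤ a + q := by omega
        exact_mod_cast this
      have hF2 := aux_F2 h0 h1 ht
      have hcast : (((a + q) + 1 : ℕ) : ℝ) = ((a + q : ℕ) : ℝ) + 1 := by push_cast; ring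
      rw [mul_add, hcast]
      linarith [ih]

section Geometry

universe w
variable {E : Type w} [NormedAddCommGroup E] [NormedSpace ℝ E]

/-- Diameter bound: a `G₂`-Lipschitz, `α`-strongly convex function forces `‖a - b‖ ≤ 4G₂/α`. -/
lemma aux_diam {α G₂ : ℝ} (hα : 0 < α) (hG₂ : 0 < G₂)
    {X : Set E} (hX : Convex ℝ X) {F : E → E → ℝ} {D2F : E → E → (E →L[ℝ] ℝ)}
    (hA1 : ∀ z ∈ X, ∀ y ∈ X, ∀ w ∈ X,
      F z w ≥ F z y + D2F z y (w - y) + α / 2 * ‖w - y‖ ^ 2)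
    (hA2 : ∀ z ∈ X, ∀ w ∈ X, ∀ y ∈ X, |F z w - F z y| ≤ G₂ * ‖w - y‖)
    {a b : E} (ha : a ∈ X) (hb : b ∈ X) : ‖a - b‖ ≤ 4 * G₂ / α := by
  set u : E := (1/2 : ℝ) • a + (1/2 : ℝ) • b with hu
  have huX : u ∈ X := hX ha hb (by norm_num) (by norm_num) (by norm_num)
  have hau : a - u = (1/2 : ℝ) • (a - b) := by
    rw [hu]; module
  have hbu : b - u = -((1/2 : ℝ) • (a - b)) := by
    rw [hu]; module
  have h1 := hA1 a ha u huX a ha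
  have h2 := hA1 a ha u huX b hb
  have hnorm_au : ‖a - u‖ = (1/2) * ‖a - b‖ := by
    rw [hau, norm_smul]; norm_num
  have hnorm_bu : ‖b - u‖ = (1/2) * ‖a - b‖ := by
    rw [hbu, norm_neg, norm_smul]; norm_num
  have hlin : D2F a u (a - u) + D2F a u (b - u) = 0 := by
    rw [hau, hbu, map_neg]; ring
  have hA2a := hA2 a ha a ha u huX
  have hA2b := hA2 a ha b hb u huX
  have habs_a : F a a - F a u ≤ G₂ * ((1/2) * ‖a - b‖) := by
    rw [← hnorm_au]; exact (abs_le.mp hA2a).2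
  have habs_b : F a b - F a u ≤ G₂ * ((1/2) * ‖a - b‖) := by
    rw [← hnorm_bu]; exact (abs_le.mp hA2b).2
  have hr : (0:ℝ) ≤ ‖a - b‖ := norm_nonneg _
  rw [hnorm_au] at h1
  rw [hnorm_bu] at h2
  -- h1 + h2 : F a a + F a b ≥ 2 F a u + α/4 ‖a-b‖²
  have hsum : α / 4 * ‖a - b‖ ^ 2 ≤ G₂ * ‖a - b‖ := by nlinarith [h1, h2, hlin]
  rcases eq_or_lt_of_le hr with h | h
  · rw [← h]; positivity
  · rw [le_div_iff₀ hα]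
    nlinarith [hsum, h]

end Geometry

section Key

universe v
variable {E : Type v} [NormedAddCommGroup E] [NormedSpace ℝ E]

/-- Strong-convexity lower bound at the constrained minimizer. -/
lemma aux_strongmin {α : ℝ} {X : Set E} (hX : Convex ℝ X)
    {F : E → E → ℝ} {D2F : E → E → (E →L[ℝ] ℝ)}
    (hdiff : ∀ z ∈ X, ∀ y ∈ X, HasFDerivWithinAt (F z) (D2F z y) X y)
    (hA1 : ∀ z ∈ X, ∀ y ∈ X, ∀ w ∈ X,
      F z w ≥ F z y + D2F z y (w - y) + α / 2 * ‖w - y‖ ^ 2)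
    {x : ℕ → E} (hx : ∀ n, 1 ≤ n → x n ∈ X)
    (hmin : ∀ n, 1 ≤ n → ∀ y ∈ X,
      ∑ k ∈ Finset.Icc 1 n, F (x k) (x (n + 1)) ≤ ∑ k ∈ Finset.Icc 1 n, F (x k) y)
    (N : ℕ) (hN : 1 ≤ N) {w : E} (hw : w ∈ X) :
    (∑ k ∈ Finset.Icc 1 N, F (x k) (x (N + 1))) + (N : ℝ) * (α / 2) * ‖w - x (N + 1)‖ ^ 2
      ≤ ∑ k ∈ Finset.Icc 1 N, F (x k) w := by
  set u : E := x (N + 1) with hu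
  have huX : u ∈ X := hx (N + 1) (by omega)
  have hxk : ∀ k ∈ Finset.Icc 1 N, x k ∈ X := fun k hk =>
    hx k (Finset.mem_Icc.mp hk).1
  have hder : HasFDerivWithinAt (fun z => ∑ k ∈ Finset.Icc 1 N, F (x k) z)
      (∑ k ∈ Finset.Icc 1 N, D2F (x k) u) X u :=
    HasFDerivWithinAt.fun_sum (fun k hk => hdiff (x k) (hxk k hk) u huX)
  have hIsMin : IsMinOn (fun z => ∑ k ∈ Finset.Icc 1 N, F (x k) z) X u :=
    isMinOn_iff.mpr (hmin N hN)
  have htang : w - u ∈ posTangentConeAt X u :=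
    sub_mem_posTangentConeAt_of_segment_subset (hX.segment_subset huX hw)
  have hopt : 0 ≤ (∑ k ∈ Finset.Icc 1 N, D2F (x k) u) (w - u) :=
    hIsMin.localize.hasFDerivWithinAt_nonneg hder htang
  rw [ContinuousLinearMap.sum_apply] at hopt
  have hsum : ∑ k ∈ Finset.Icc 1 N,
      (F (x k) u + D2F (x k) u (w - u) + α / 2 * ‖w - u‖ ^ 2)
      ≤ ∑ k ∈ Finset.Icc 1 N, F (x k) w :=
    Finset.sum_le_sum (fun k hk => hA1 (x k) (hxk k hk) u huX w hw)
  rw [Finset.sum_add_distrib, Finset.sum_add_distrib, Finset.sum_const,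
    Nat.card_Icc] at hsum
  simp only [Nat.add_sub_cancel, nsmul_eq_mul] at hsum
  have : (N : ℝ) * (α / 2 * ‖w - u‖ ^ 2) = (N : ℝ) * (α / 2) * ‖w - u‖ ^ 2 := by ring
  linarith [hopt, hsum, this ▸ hsum]

end Key

section Key2

universe v
variable {E : Type v} [NormedAddCommGroup E] [NormedSpace ℝ E]

/-- Key recursion. -/
lemma aux_key {α β : ℝ} (hα : 0 < α) {X : Set E} (hX : Convex ℝ X)
    {F : E → E → ℝ} {D2F : E → E → (E →L[ℝ] ℝ)}
    (hdiff : ∀ z ∈ X, ∀ y ∈ X, HasFDerivWithinAt (F z) (D2F z y) X y)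
    (hA1 : ∀ z ∈ X, ∀ y ∈ X, ∀ w ∈ X,
      F z w ≥ F z y + D2F z y (w - y) + α / 2 * ‖w - y‖ ^ 2)
    (hA3 : ∀ w ∈ X, ∀ y ∈ X, ∀ z ∈ X, ‖D2F w z - D2F y z‖ ≤ β * ‖w - y‖)
    {x : ℕ → E} (hx : ∀ n, 1 ≤ n → x n ∈ X)
    (hmin : ∀ n, 1 ≤ n → ∀ y ∈ X,
      ∑ k ∈ Finset.Icc 1 n, F (x k) (x (n + 1)) ≤ ∑ k ∈ Finset.Icc 1 n, F (x k) y)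
    (p : ℕ) (hp : 1 ≤ p) :
    α * (((p : ℝ) + 1) * p) * ‖x (p + 2) - x (p + 1)‖ ^ 2
      ≤ β * ‖x (p + 2) - x (p + 1)‖ * ∑ k ∈ Finset.Icc 1 p, ‖x (p + 1) - x k‖ := by
  set w1 : E := x (p + 1) with hw1
  set w2 : E := x (p + 2) with hw2
  have hw1X : w1 ∈ X := hx (p + 1) (by omega)
  have hw2X : w2 ∈ X := hx (p + 2) (by omega)
  set d : ℝ := ‖w2 - w1‖ with hd
  set Φ : E → ℝ := fun w => ∑ k ∈ Finset.Icc 1 p, F (x k) w with hΦ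
  set S : ℝ := ∑ k ∈ Finset.Icc 1 p, ‖w1 - x k‖ with hS
  -- (ii)
  have hii : Φ w1 + (p : ℝ) * (α / 2) * d ^ 2 ≤ Φ w2 := by
    have := aux_strongmin hX hdiff hA1 hx hmin p hp hw2X
    simpa [hΦ, hd, hw1, hw2] using this
  -- (i)
  have hi : (Φ w2 + F w1 w2) + ((p : ℝ) + 1) * (α / 2) * d ^ 2 ≤ Φ w1 + F w1 w1 := by
    have h := aux_strongmin hX hdiff hA1 hx hmin (p + 1) (by omega) hw1X
    have hsplit : ∀ w, ∑ k ∈ Finset.Icc 1 (p + 1), F (x k) w = Φ w + F (x (p + 1)) w :=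
      fun w => Finset.sum_Icc_succ_top (by omega) _
    rw [hsplit, hsplit] at h
    have hnorm : ‖w1 - x (p + 1 + 1)‖ = d := by
      rw [hd, norm_sub_rev]
    rw [hnorm] at h
    push_cast at h ⊢
    convert h using 2
  -- (iii): Lipschitz comparison, summed
  have hiii : (p : ℝ) * (F w1 w1 - F w1 w2) ≤ (Φ w1 - Φ w2) + (β * d) * S := by
    have hterm : ∀ k ∈ Finset.Icc 1 p,
        F w1 w1 - F w1 w2 ≤ (F (x k) w1 - F (x k) w2) + (β * d) * ‖w1 - x k‖ := by
      intro k hk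
      have hkX : x k ∈ X := hx k (Finset.mem_Icc.mp hk).1
      have hmvt := Convex.norm_image_sub_le_of_norm_hasFDerivWithin_le
        (f := fun z => F w1 z - F (x k) z)
        (f' := fun z => D2F w1 z - D2F (x k) z)
        (C := β * ‖w1 - x k‖) (s := X)
        (fun z hz => (hdiff w1 hw1X z hz).sub (hdiff (x k) hkX z hz))
        (fun z hz => hA3 w1 hw1X (x k) hkX z hz)
        hX hw2X hw1X
      rw [Real.norm_eq_abs] at hmvt
      have h2 := (abs_le.mp hmvt).2
      have hnorm : ‖w1 - w2‖ = d := by rw [hd, norm_sub_rev]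
      rw [hnorm] at h2
      linarith [h2]
    have hsum := Finset.sum_le_sum hterm
    rw [Finset.sum_const, Nat.card_Icc, Finset.sum_add_distrib,
      Finset.sum_sub_distrib, ← Finset.mul_sum] at hsum
    simp only [Nat.add_sub_cancel, nsmul_eq_mul] at hsum
    exact hsum
  -- assemble
  have hd2 : (0:ℝ) ≤ d ^ 2 := sq_nonneg d
  have hPc : (1:ℝ) ≤ (p:ℝ) := by exact_mod_cast hp
  nlinarith [hi, hii, hiii, hd2, hPc]

end Key2

section Decay

universe v
variable {E : Type v} [NormedAddCommGroup E] [NormedSpace ℝ E]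

/-- Telescoping. -/
lemma aux_tele (x : ℕ → E) (a : ℕ) : ∀ b, a ≤ b →
    ‖x b - x a‖ ≤ ∑ j ∈ Finset.Ico a b, ‖x (j + 1) - x j‖ := by
  intro b
  induction b with
  | zero =>
      intro hab
      have : a = 0 := by omega
      subst this
      simp
  | succ b ih =>
      intro hab
      rcases eq_or_lt_of_le hab with h | h
      · subst h
        simp
      · have hab' : a ≤ b := by omega
        rw [Finset.sum_Ico_succ_top hab']
        calc ‖x (b + 1) - x a‖ ≤ ‖x (b + 1) - x b‖ + ‖x b - x a‖ := by
              have : x (b + 1) - x a = (x (b + 1) - x b) + (x b - x a) := by abel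
              rw [this]; exact norm_add_le _ _
        _ ≤ (∑ j ∈ Finset.Ico a b, ‖x (j + 1) - x j‖) + ‖x (b + 1) - x b‖ := by
              linarith [ih hab']
        _ = (∑ j ∈ Finset.Ico a b, ‖x (j + 1) - x j‖) + ‖x (b + 1) - x b‖ := rfl

/-- Decay of successive steps: `‖x (p+2) - x (p+1)‖ ≤ D (p+1)^(θ-2)`. -/
lemma aux_decay {α G₂ β θ : ℝ} (hα : 0 < α) (hG₂ : 0 < G₂) (hβ : 0 ≤ β)
    (hθ : θ = β / α) (hθ1 : θ < 1) {x : ℕ → E}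
    (hdiam : ∀ a b, 1 ≤ a → 1 ≤ b → ‖x a - x b‖ ≤ 4 * G₂ / α)
    (hkey : ∀ p : ℕ, 1 ≤ p → α * (((p : ℝ) + 1) * p) * ‖x (p + 2) - x (p + 1)‖ ^ 2
      ≤ β * ‖x (p + 2) - x (p + 1)‖ * ∑ k ∈ Finset.Icc 1 p, ‖x (p + 1) - x k‖) :
    ∀ p : ℕ, 1 ≤ p → ‖x (p + 2) - x (p + 1)‖ ≤ (4 * G₂ / α) * ((p : ℝ) + 1) ^ (θ - 2) := by
  have hθ0 : 0 ≤ θ := by rw [hθ]; positivity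
  have hβα : β = θ * α := by rw [hθ]; field_simp
  set D : ℝ := 4 * G₂ / α with hD
  have hDpos : 0 < D := by positivity
  intro p
  induction p using Nat.strong_induction_on with
  | _ p IH =>
  intro hp
  have hppos : (0:ℝ) < (p:ℝ) := by exact_mod_cast hp
  have hp1 : (1:ℝ) ≤ (p:ℝ) := by exact_mod_cast hp
  set d : ℝ := ‖x (p + 2) - x (p + 1)‖ with hdd
  rcases eq_or_lt_of_le (norm_nonneg (x (p + 2) - x (p + 1))) with h0 | hdpos
  · rw [hdd, ← h0]; positivity
  set S : ℝ := ∑ k ∈ Finset.Icc 1 p, ‖x (p + 1) - x k‖ with hS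
  have hAd : α * (((p : ℝ) + 1) * p) * d ≤ β * S := by
    have h := hkey p hp
    exact le_of_mul_le_mul_right (by rw [hS]; linear_combination h) hdpos
  set S1 : ℝ := ∑ j ∈ Finset.Icc 2 p, ((j:ℝ)) ^ (θ - 1) with hS1
  have hS1nonneg : 0 ≤ S1 := Finset.sum_nonneg fun j _ => Real.rpow_nonneg (by positivity) _
  -- bound S ≤ D * (1 + S1)
  have hSb : S ≤ D * (1 + S1) := by
    have hsplit : Finset.Icc 1 p = insert 1 (Finset.Icc 2 p) := by
      ext i; simp only [Finset.mem_Icc, Finset.mem_insert]; omega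
    rw [hS, hsplit, Finset.sum_insert (by simp)]
    have h1 : ‖x (p + 1) - x 1‖ ≤ D := hdiam (p + 1) 1 (by omega) le_rfl
    have h2 : ∑ k ∈ Finset.Icc 2 p, ‖x (p + 1) - x k‖
        ≤ ∑ k ∈ Finset.Icc 2 p, ∑ j ∈ Finset.Icc k p, D * ((j:ℝ)) ^ (θ - 2) := by
      apply Finset.sum_le_sum
      intro k hk
      obtain ⟨hk2, hkp⟩ := Finset.mem_Icc.mp hk
      calc ‖x (p + 1) - x k‖ ≤ ∑ j ∈ Finset.Ico k (p + 1), ‖x (j + 1) - x j‖ :=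
            aux_tele x k (p + 1) (by omega)
      _ = ∑ j ∈ Finset.Icc k p, ‖x (j + 1) - x j‖ := by rw [Finset.Ico_add_one_right_eq_Icc]
      _ ≤ ∑ j ∈ Finset.Icc k p, D * ((j:ℝ)) ^ (θ - 2) := by
            apply Finset.sum_le_sum
            intro j hj
            obtain ⟨hjk, hjp⟩ := Finset.mem_Icc.mp hj
            obtain ⟨q, rfl⟩ : ∃ q, j = q + 1 := ⟨j - 1, by omega⟩
            have hq1 : 1 ≤ q := by omega
            have hqp : q < p := by omega
            have := IH q hqp hq1
            calc ‖x (q + 1 + 1) - x (q + 1)‖ = ‖x (q + 2) - x (q + 1)‖ := by norm_num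
            _ ≤ D * ((q : ℝ) + 1) ^ (θ - 2) := this
            _ = D * (((q + 1 : ℕ) : ℝ)) ^ (θ - 2) := by push_cast; ring_nf
    have h3 : ∑ k ∈ Finset.Icc 2 p, ∑ j ∈ Finset.Icc k p, D * ((j:ℝ)) ^ (θ - 2)
        = ∑ j ∈ Finset.Icc 2 p, ∑ k ∈ Finset.Icc 2 j, D * ((j:ℝ)) ^ (θ - 2) := by
      apply Finset.sum_comm'
      intro k j
      simp only [Finset.mem_Icc]
      omega
    have h4 : ∑ j ∈ Finset.Icc 2 p, ∑ k ∈ Finset.Icc 2 j, D * ((j:ℝ)) ^ (θ - 2)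
        ≤ D * S1 := by
      rw [hS1, Finset.mul_sum]
      apply Finset.sum_le_sum
      intro j hj
      obtain ⟨hj2, hjp⟩ := Finset.mem_Icc.mp hj
      rw [Finset.sum_const, Nat.card_Icc, nsmul_eq_mul]
      have hj0 : (0:ℝ) < (j:ℝ) := by exact_mod_cast (by omega : 0 < j)
      have hcard : (((j + 1 - 2 : ℕ)):ℝ) ≤ (j:ℝ) := by
        exact_mod_cast (by omega : j + 1 - 2 ≤ j)
      have he : (j:ℝ) ^ (θ - 1) = (j:ℝ) ^ (θ - 2) * (j:ℝ) := by
        rw [← Real.rpow_add_one hj0.ne']; ring_nf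
      calc (((j + 1 - 2 : ℕ)):ℝ) * (D * ((j:ℝ)) ^ (θ - 2))
          ≤ (j:ℝ) * (D * ((j:ℝ)) ^ (θ - 2)) :=
            mul_le_mul_of_nonneg_right hcard (by positivity)
      _ = D * ((j:ℝ)) ^ (θ - 1) := by rw [he]; ring
    linarith [h1, h2, h3 ▸ h2, h4]
  -- combine everything
  have hS1b : θ * S1 ≤ (p:ℝ) ^ θ - 1 := by
    obtain ⟨q, rfl⟩ : ∃ q, p = 1 + q := ⟨p - 1, by omega⟩
    have h := aux_tsum hθ0 hθ1.le 1 le_rfl q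
    norm_num [Real.one_rpow] at h
    rw [hS1]
    convert h using 3 <;> push_cast <;> ring_nf
  have hF3 := aux_F3' hθ0 hθ1.le hp1
  have hchain : α * (((p:ℝ) + 1) * p) * d ≤ α * D * ((p:ℝ) * ((p:ℝ) + 1) ^ (θ - 1)) := by
    calc α * (((p:ℝ) + 1) * p) * d ≤ β * S := hAd
    _ ≤ β * (D * (1 + S1)) := mul_le_mul_of_nonneg_left hSb hβ
    _ = α * D * (θ * (1 + S1)) := by rw [hβα]; ring
    _ ≤ α * D * ((p:ℝ) * ((p:ℝ) + 1) ^ (θ - 1)) := by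
        apply mul_le_mul_of_nonneg_left _ (by positivity)
        have hexp : θ * (1 + S1) = θ + θ * S1 := by ring
        linarith [hS1b, hF3, hexp ▸ le_refl (θ * (1 + S1))]
  have hne : ((p:ℝ) + 1) ≠ 0 := by positivity
  have hrw : ((p:ℝ) + 1) ^ (θ - 1) = ((p:ℝ) + 1) ^ (θ - 2) * ((p:ℝ) + 1) := by
    rw [← Real.rpow_add_one hne]; ring_nf
  have hfinal : (α * (((p:ℝ) + 1) * p)) * d
      ≤ (α * (((p:ℝ) + 1) * p)) * (D * ((p:ℝ) + 1) ^ (θ - 2)) := by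
    have : (α * (((p:ℝ) + 1) * p)) * (D * ((p:ℝ) + 1) ^ (θ - 2))
        = α * D * ((p:ℝ) * ((p:ℝ) + 1) ^ (θ - 1)) := by rw [hrw]; ring
    rw [this]
    exact hchain
  exact le_of_mul_le_mul_left hfinal (by positivity)

end Decay

/-- Summation bound for the final estimate. -/
lemma aux_F4 {θ : ℝ} (hθpos : 0 < θ) (hθ1 : θ < 1) {m n : ℕ} (hm : 2 ≤ m) (hmn : m < n) :
    ∑ j ∈ Finset.Ico m n, ((j:ℝ)) ^ (θ - 1)
      ≤ (2 / θ) * ((n : ℝ) - (m : ℝ)) * (n : ℝ) ^ (θ - 1) := by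
  have hm0 : (0:ℝ) < (m:ℝ) := by exact_mod_cast (by omega : 0 < m)
  have hn0 : (0:ℝ) < (n:ℝ) := by exact_mod_cast (by omega : 0 < n)
  have hnm : (0:ℝ) < (n:ℝ) - (m:ℝ) := by
    have : (m:ℝ) < (n:ℝ) := by exact_mod_cast hmn
    linarith
  have hnpow : (0:ℝ) < (n:ℝ) ^ (θ - 1) := Real.rpow_pos_of_pos hn0 _
  by_cases hc : n ≤ 2 * m
  · -- each term ≤ 2 n^(θ-1)
    have hterm : ∀ j ∈ Finset.Ico m n, ((j:ℝ)) ^ (θ - 1) ≤ 2 * (n:ℝ) ^ (θ - 1) := by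
      intro j hj
      obtain ⟨hjm, hjn⟩ := Finset.mem_Ico.mp hj
      have hjm' : (m:ℝ) ≤ (j:ℝ) := by exact_mod_cast hjm
      have h1 : ((j:ℝ)) ^ (θ - 1) ≤ ((m:ℝ)) ^ (θ - 1) :=
        Real.rpow_le_rpow_of_nonpos hm0 hjm' (by linarith)
      have h2 : ((2:ℝ) * m) ^ (θ - 1) ≤ (n:ℝ) ^ (θ - 1) := by
        apply Real.rpow_le_rpow_of_nonpos hn0 _ (by linarith)
        exact_mod_cast hc
      have h3 : ((2:ℝ) * m) ^ (θ - 1) = (2:ℝ) ^ (θ - 1) * ((m:ℝ)) ^ (θ - 1) :=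
        Real.mul_rpow (by norm_num) hm0.le
      have h4 : (1:ℝ) ≤ (2:ℝ) ^ θ := by
        have := Real.rpow_le_rpow_of_exponent_le (by norm_num : (1:ℝ) ≤ 2) hθpos.le
        simpa using this
      have h5 : (2:ℝ) ^ θ = 2 * (2:ℝ) ^ (θ - 1) := by
        rw [show θ = (θ - 1) + 1 by ring, Real.rpow_add_one (by norm_num : (2:ℝ) ≠ 0)]
        ring_nf
      -- m^(θ-1) ≤ 2^θ m^(θ-1) ≤ 2 n^(θ-1)
      have hmp : (0:ℝ) ≤ ((m:ℝ)) ^ (θ - 1) := Real.rpow_nonneg hm0.le _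
      nlinarith [h1, h2, h3 ▸ h2, h4, h5, hmp]
    calc ∑ j ∈ Finset.Ico m n, ((j:ℝ)) ^ (θ - 1)
        ≤ (Finset.Ico m n).card • (2 * (n:ℝ) ^ (θ - 1)) :=
          Finset.sum_le_card_nsmul _ _ _ hterm
    _ = ((n - m : ℕ) : ℝ) * (2 * (n:ℝ) ^ (θ - 1)) := by rw [Nat.card_Ico, nsmul_eq_mul]
    _ = ((n:ℝ) - (m:ℝ)) * (2 * (n:ℝ) ^ (θ - 1)) := by
          rw [Nat.cast_sub hmn.le]
    _ ≤ (2 / θ) * ((n : ℝ) - (m : ℝ)) * (n : ℝ) ^ (θ - 1) := by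
          have h2θ : (2:ℝ) ≤ 2 / θ := by
            rw [le_div_iff₀ hθpos]; nlinarith
          have hkey : 0 ≤ (2 / θ - 2) * (((n:ℝ) - (m:ℝ)) * (n:ℝ) ^ (θ - 1)) :=
            mul_nonneg (by linarith) (mul_nonneg hnm.le hnpow.le)
          nlinarith [hkey]
  · push_neg at hc
    obtain ⟨a, rfl⟩ : ∃ a, m = a + 1 := ⟨m - 1, by omega⟩
    obtain ⟨q, hq⟩ : ∃ q, n = (a + q) + 1 := ⟨n - a - 1, by omega⟩
    have ha1 : 1 ≤ a := by omega
    have htsum := aux_tsum hθpos.le hθ1.le a ha1 q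
    have hIco : Finset.Ico (a + 1) n = Finset.Icc (a + 1) (a + q) := by
      rw [hq, Finset.Ico_add_one_right_eq_Icc]
    have hθS : θ * ∑ j ∈ Finset.Ico (a + 1) n, ((j:ℝ)) ^ (θ - 1) ≤ (n:ℝ) ^ θ := by
      rw [hIco]
      have h1 : ((a + q : ℕ) : ℝ) ^ θ ≤ (n:ℝ) ^ θ := by
        apply Real.rpow_le_rpow (by positivity) _ hθpos.le
        exact_mod_cast (by omega : a + q ≤ n)
      have h2 : (0:ℝ) ≤ ((a:ℕ):ℝ) ^ θ := Real.rpow_nonneg (by positivity) _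
      linarith [htsum]
    have hrn : (n:ℝ) ^ θ = (n:ℝ) * (n:ℝ) ^ (θ - 1) := by
      rw [show θ = (θ - 1) + 1 by ring, Real.rpow_add_one hn0.ne']
      ring_nf
    have hn2 : (n:ℝ) ≤ 2 * ((n:ℝ) - ((a:ℝ) + 1)) := by
      have : 2 * (a + 1) ≤ n := by omega
      have h' : 2 * ((a:ℝ) + 1) ≤ (n:ℝ) := by exact_mod_cast this
      linarith
    have hfin : θ * ∑ j ∈ Finset.Ico (a + 1) n, ((j:ℝ)) ^ (θ - 1)
        ≤ θ * ((2 / θ) * ((n : ℝ) - ((a:ℝ) + 1)) * (n : ℝ) ^ (θ - 1)) := by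
      have : θ * ((2 / θ) * ((n : ℝ) - ((a:ℝ) + 1)) * (n : ℝ) ^ (θ - 1))
          = 2 * ((n : ℝ) - ((a:ℝ) + 1)) * (n : ℝ) ^ (θ - 1) := by
        field_simp
      rw [this]
      calc θ * ∑ j ∈ Finset.Ico (a + 1) n, ((j:ℝ)) ^ (θ - 1) ≤ (n:ℝ) ^ θ := hθS
      _ = (n:ℝ) * (n:ℝ) ^ (θ - 1) := hrn
      _ ≤ 2 * ((n : ℝ) - ((a:ℝ) + 1)) * (n : ℝ) ^ (θ - 1) := by
          apply mul_le_mul_of_nonneg_right hn2 hnpow.le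
    have : ∑ j ∈ Finset.Ico (a + 1) n, ((j:ℝ)) ^ (θ - 1)
        ≤ (2 / θ) * ((n : ℝ) - ((a:ℝ) + 1)) * (n : ℝ) ^ (θ - 1) :=
      le_of_mul_le_mul_left hfin hθpos
    convert this using 3
    push_cast
    ring

/-- Corollary: bound on `S_{m:n}`.
Under (A1), (A2), (A3) with `θ = β/α < 1`, there is a constant `C > 0` depending only
on `θ`, `α`, `G₂` (hence quantified before the problem data) such that for all
`n > m ≥ 2`, `S_{m:n} ≤ C (θ/((n−m) m^{2−θ}) + 1/n^{1−θ})`, where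
`S_{m:n} = (Σ_{k=m}^{n−1} ‖x_n − x_k‖)/(n−m)`. -/
theorem stmt_7 (α G₂ β θ : ℝ) (hα : 0 < α) (hG₂ : 0 < G₂) (hβ : 0 ≤ β)
    (hθ : θ = β / α) (hθ1 : θ < 1) :
    ∃ C > (0 : ℝ), ∀ (E : Type u) [NormedAddCommGroup E] [NormedSpace ℝ E]
      (X : Set E), Convex ℝ X →
      ∀ (F : E → E → ℝ) (D2F : E → E → (E →L[ℝ] ℝ)),
      (∀ z ∈ X, ∀ y ∈ X, HasFDerivWithinAt (F z) (D2F z y) X y) →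
      (∀ z ∈ X, ∀ y ∈ X, ∀ w ∈ X,
        F z w ≥ F z y + D2F z y (w - y) + α / 2 * ‖w - y‖ ^ 2) →
      (∀ z ∈ X, ∀ w ∈ X, ∀ y ∈ X, |F z w - F z y| ≤ G₂ * ‖w - y‖) →
      (∀ w ∈ X, ∀ y ∈ X, ∀ z ∈ X, ‖D2F w z - D2F y z‖ ≤ β * ‖w - y‖) →
      ∀ x : ℕ → E, (∀ n, 1 ≤ n → x n ∈ X) →
      (∀ n, 1 ≤ n → ∀ y ∈ X,
        ∑ k ∈ Finset.Icc 1 n, F (x k) (x (n + 1)) ≤ ∑ k ∈ Finset.Icc 1 n, F (x k) y) →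
      ∀ m n : ℕ, 2 ≤ m → m < n →
        (∑ k ∈ Finset.Icc m (n - 1), ‖x n - x k‖) / ((n : ℝ) - (m : ℝ)) ≤
          C * (θ / (((n : ℝ) - (m : ℝ)) * (m : ℝ) ^ (2 - θ)) +
            1 / (n : ℝ) ^ (1 - θ)) := by
  have hθ0 : 0 ≤ θ := by rw [hθ]; positivity
  rcases eq_or_lt_of_le hθ0 with hθz | hθpos
  · -- θ = 0 : the iterates are eventually constant
    refine ⟨1, one_pos, ?_⟩
    intro E _ _ X hX F D2F hdiff hA1 hA2 hA3 x hx hmin m n hm hmn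
    have hβ0 : β = 0 := by
      have h := hθ
      rw [← hθz] at h
      field_simp at h
      linarith [h]
    have hkey := fun p hp => aux_key hα hX hdiff hA1 hA3 hx hmin p hp
    have hstep : ∀ p : ℕ, 1 ≤ p → x (p + 2) = x (p + 1) := by
      intro p hp
      have h := hkey p hp
      rw [hβ0] at h
      simp only [zero_mul] at h
      have hd2 : ‖x (p + 2) - x (p + 1)‖ ^ 2 ≤ 0 := by
        have hpos : (0:ℝ) < α * (((p : ℝ) + 1) * p) := by
          have : (1:ℝ) ≤ (p:ℝ) := by exact_mod_cast hp
          positivity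
        nlinarith [h, hpos, sq_nonneg (‖x (p + 2) - x (p + 1)‖)]
      have : ‖x (p + 2) - x (p + 1)‖ = 0 := by nlinarith [norm_nonneg (x (p + 2) - x (p + 1))]
      rw [norm_eq_zero, sub_eq_zero] at this
      exact this
    have hconst : ∀ q : ℕ, 2 ≤ q → x q = x 2 := by
      intro q hq
      induction q with
      | zero => omega
      | succ q ih =>
          rcases Nat.lt_or_ge q 2 with h | h
          · have : q = 1 := by omega
            subst this
            rfl
          · obtain ⟨p, rfl⟩ : ∃ p, q = p + 1 := ⟨q - 1, by omega⟩
            rw [hstep p (by omega)]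
            exact ih (by omega)
    have hzero : ∀ k ∈ Finset.Icc m (n - 1), ‖x n - x k‖ = 0 := by
      intro k hk
      obtain ⟨hk1, hk2⟩ := Finset.mem_Icc.mp hk
      rw [hconst n (by omega), hconst k (by omega), sub_self, norm_zero]
    rw [Finset.sum_eq_zero hzero, zero_div]
    rw [← hθz]
    have hnm : (0:ℝ) < (n:ℝ) - (m:ℝ) := by
      have : (m:ℝ) < (n:ℝ) := by exact_mod_cast hmn
      linarith
    have hn0 : (0:ℝ) < (n:ℝ) := by exact_mod_cast (by omega : 0 < n)
    have h1 : (0:ℝ) ≤ 0 / (((n : ℝ) - (m : ℝ)) * (m : ℝ) ^ (2 - (0:ℝ))) := by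
      rw [zero_div]
    have h2 : (0:ℝ) < 1 / (n : ℝ) ^ (1 - (0:ℝ)) := by positivity
    nlinarith [h1, h2]
  · -- θ > 0
    refine ⟨8 * G₂ / (α * θ), by positivity, ?_⟩
    intro E _ _ X hX F D2F hdiff hA1 hA2 hA3 x hx hmin m n hm hmn
    set D : ℝ := 4 * G₂ / α with hD
    have hDpos : 0 < D := by positivity
    have hdiam : ∀ a b : ℕ, 1 ≤ a → 1 ≤ b → ‖x a - x b‖ ≤ D := fun a b ha hb =>
      aux_diam hα hG₂ hX hA1 hA2 (hx a ha) (hx b hb)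
    have hdecay := aux_decay hα hG₂ hβ hθ hθ1 hdiam
      (fun p hp => aux_key hα hX hdiff hA1 hA3 hx hmin p hp)
    have hnm : (0:ℝ) < (n:ℝ) - (m:ℝ) := by
      have : (m:ℝ) < (n:ℝ) := by exact_mod_cast hmn
      linarith
    have hn0 : (0:ℝ) < (n:ℝ) := by exact_mod_cast (by omega : 0 < n)
    have hnpow : (0:ℝ) < (n:ℝ) ^ (θ - 1) := Real.rpow_pos_of_pos hn0 _
    -- sum bound
    have hIcc : Finset.Icc m (n - 1) = Finset.Ico m n := by
      ext i
      simp only [Finset.mem_Icc, Finset.mem_Ico]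
      omega
    have hsum : ∑ k ∈ Finset.Icc m (n - 1), ‖x n - x k‖
        ≤ D * ∑ j ∈ Finset.Ico m n, ((j:ℝ)) ^ (θ - 1) := by
      rw [hIcc]
      have step1 : ∑ k ∈ Finset.Ico m n, ‖x n - x k‖
          ≤ ∑ k ∈ Finset.Ico m n, ∑ j ∈ Finset.Ico k n, D * ((j:ℝ)) ^ (θ - 2) := by
        apply Finset.sum_le_sum
        intro k hk
        obtain ⟨hkm, hkn⟩ := Finset.mem_Ico.mp hk
        calc ‖x n - x k‖ ≤ ∑ j ∈ Finset.Ico k n, ‖x (j + 1) - x j‖ :=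
              aux_tele x k n (by omega)
        _ ≤ ∑ j ∈ Finset.Ico k n, D * ((j:ℝ)) ^ (θ - 2) := by
              apply Finset.sum_le_sum
              intro j hj
              obtain ⟨hjk, hjn⟩ := Finset.mem_Ico.mp hj
              obtain ⟨q, rfl⟩ : ∃ q, j = q + 1 := ⟨j - 1, by omega⟩
              have := hdecay q (by omega)
              calc ‖x (q + 1 + 1) - x (q + 1)‖ = ‖x (q + 2) - x (q + 1)‖ := by norm_num
              _ ≤ D * ((q : ℝ) + 1) ^ (θ - 2) := this
              _ = D * (((q + 1 : ℕ) : ℝ)) ^ (θ - 2) := by push_cast; ring_nf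
      have step2 : ∑ k ∈ Finset.Ico m n, ∑ j ∈ Finset.Ico k n, D * ((j:ℝ)) ^ (θ - 2)
          = ∑ j ∈ Finset.Ico m n, ∑ k ∈ Finset.Ico m (j + 1), D * ((j:ℝ)) ^ (θ - 2) := by
        apply Finset.sum_comm'
        intro k j
        simp only [Finset.mem_Ico]
        omega
      have step3 : ∑ j ∈ Finset.Ico m n, ∑ k ∈ Finset.Ico m (j + 1), D * ((j:ℝ)) ^ (θ - 2)
          ≤ D * ∑ j ∈ Finset.Ico m n, ((j:ℝ)) ^ (θ - 1) := by
        rw [Finset.mul_sum]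
        apply Finset.sum_le_sum
        intro j hj
        obtain ⟨hjm, hjn⟩ := Finset.mem_Ico.mp hj
        rw [Finset.sum_const, Nat.card_Ico, nsmul_eq_mul]
        have hj0 : (0:ℝ) < (j:ℝ) := by exact_mod_cast (by omega : 0 < j)
        have hcard : (((j + 1 - m : ℕ)):ℝ) ≤ (j:ℝ) := by
          exact_mod_cast (by omega : j + 1 - m ≤ j)
        have he : (j:ℝ) ^ (θ - 1) = (j:ℝ) ^ (θ - 2) * (j:ℝ) := by
          rw [show θ - 1 = (θ - 2) + 1 by ring, Real.rpow_add_one hj0.ne']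
        calc (((j + 1 - m : ℕ)):ℝ) * (D * ((j:ℝ)) ^ (θ - 2))
            ≤ (j:ℝ) * (D * ((j:ℝ)) ^ (θ - 2)) :=
              mul_le_mul_of_nonneg_right hcard (by positivity)
        _ = D * ((j:ℝ)) ^ (θ - 1) := by rw [he]; ring
      linarith [step1, step2 ▸ step1, step3]
    have hF4 := aux_F4 hθpos hθ1 hm hmn
    -- conclude
    have hT : ∑ k ∈ Finset.Icc m (n - 1), ‖x n - x k‖
        ≤ (8 * G₂ / (α * θ)) * ((n:ℝ) - (m:ℝ)) * (n:ℝ) ^ (θ - 1) := by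
      calc ∑ k ∈ Finset.Icc m (n - 1), ‖x n - x k‖
          ≤ D * ∑ j ∈ Finset.Ico m n, ((j:ℝ)) ^ (θ - 1) := hsum
      _ ≤ D * ((2 / θ) * ((n : ℝ) - (m : ℝ)) * (n : ℝ) ^ (θ - 1)) :=
          mul_le_mul_of_nonneg_left hF4 hDpos.le
      _ = (8 * G₂ / (α * θ)) * ((n:ℝ) - (m:ℝ)) * (n:ℝ) ^ (θ - 1) := by
          rw [hD]; field_simp; ring
    have hLHS : (∑ k ∈ Finset.Icc m (n - 1), ‖x n - x k‖) / ((n : ℝ) - (m : ℝ))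
        ≤ (8 * G₂ / (α * θ)) * (n:ℝ) ^ (θ - 1) := by
      rw [div_le_iff₀ hnm]
      calc ∑ k ∈ Finset.Icc m (n - 1), ‖x n - x k‖
          ≤ (8 * G₂ / (α * θ)) * ((n:ℝ) - (m:ℝ)) * (n:ℝ) ^ (θ - 1) := hT
      _ = (8 * G₂ / (α * θ)) * (n:ℝ) ^ (θ - 1) * ((n:ℝ) - (m:ℝ)) := by ring
    have hrpow : (n:ℝ) ^ (θ - 1) = 1 / (n : ℝ) ^ (1 - θ) := by
      rw [show θ - 1 = -(1 - θ) by ring, Real.rpow_neg hn0.le, one_div]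
    have hRHS : (8 * G₂ / (α * θ)) * (n:ℝ) ^ (θ - 1)
        ≤ (8 * G₂ / (α * θ)) * (θ / (((n : ℝ) - (m : ℝ)) * (m : ℝ) ^ (2 - θ)) +
            1 / (n : ℝ) ^ (1 - θ)) := by
      apply mul_le_mul_of_nonneg_left _ (by positivity)
      rw [← hrpow]
      have hfirst : (0:ℝ) ≤ θ / (((n : ℝ) - (m : ℝ)) * (m : ℝ) ^ (2 - θ)) := by
        apply div_nonneg hθ0
        apply mul_nonneg hnm.le
        exact Real.rpow_nonneg (by positivity) _
      linarith
    linarith [hLHS, hRHS]
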